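/- Let H be a complex Hilbert space and let A, B ∈ B(H) be positive operators with range B ⊆ range(A + B). Let E ∈ B(H) be the reduced solution of (A + B)X = B, i.e. (A + B)E = B and range E ⊆ closure(range(A + B)). Then for every x ∈ H, Re⟨A(Ex), Ex⟩ + Re⟨B(x − Ex), x − Ex⟩ = inf over y ∈ H of ( Re⟨Ay, y⟩ + Re⟨B(x − y), x − y⟩ ). -/

import Mathlib

open scoped InnerProductSpace

/-- Theorem 6.9: if `A, B ≥ 0` with `R(B) ⊆ R(A+B)` and `E` is the reduced solution of
`(A+B)X = B`, then `E` solves `A : B = X*AX + (1−X)*B(1−X)`; equivalently, for every `x`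
the quadratic form of the parallel sum evaluated via `E` attains the defining infimum. -/
theorem reduced_solution_solves_parallel_sum_equation
    {H : Type*} [NormedAddCommGroup H] [InnerProductSpace ℂ H] [CompleteSpace H]
    (A B : H →L[ℂ] H) (hA : A.IsPositive) (hB : B.IsPositive)
    (hrange : Set.range B ⊆ Set.range (A + B))
    (E : H →L[ℂ] H)
    (hE₁ : (A + B).comp E = B)
    (hE₂ : Set.range E ⊆ closure (Set.range (A + B))) :
    ∀ x : H,
      (⟪A (E x), E x⟫_ℂ).re + (⟪B (x - E x), x - E x⟫_ℂ).re =
        ⨅ y : H, ((⟪A y, y⟫_ℂ).re + (⟪B (x - y), x - y⟫_ℂ).re) := by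
  intro x
  have hAsym := hA.1
  have hBsym := hB.1
  set u := E x with hu
  have hABx : A u + B u = B x := by
    have := congrFun (congrArg DFunLike.coe hE₁) x
    simpa using this
  have hBw : B (x - u) = A u := by
    rw [map_sub, ← hABx]; abel
  have hnn : ∀ y : H, 0 ≤ (⟪A y, y⟫_ℂ).re + (⟪B (x - y), x - y⟫_ℂ).re := by
    intro y
    have h1 := hA.2 y
    have h2 := hB.2 (x - y)
    simp only [ContinuousLinearMap.reApplyInnerSelf, RCLike.re_to_complex] at h1 h2
    linarith
  have key : ∀ y : H, (⟪A u, u⟫_ℂ).re + (⟪B (x - u), x - u⟫_ℂ).re ≤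
      (⟪A y, y⟫_ℂ).re + (⟪B (x - y), x - y⟫_ℂ).re := by
    intro y
    set z := y - u with hzdef
    have hy : y = u + z := by rw [hzdef]; abel
    have hxy : x - y = (x - u) - z := by rw [hy]; abel
    have cross1 : ⟪A u, z⟫_ℂ - ⟪B (x - u), z⟫_ℂ = 0 := by rw [hBw]; ring
    have cross2 : ⟪A z, u⟫_ℂ - ⟪B z, x - u⟫_ℂ = 0 := by
      rw [sub_eq_zero]
      calc ⟪A z, u⟫_ℂ = ⟪z, A u⟫_ℂ := hAsym z u
        _ = ⟪z, B (x - u)⟫_ℂ := by rw [hBw]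
        _ = ⟪B z, x - u⟫_ℂ := (hBsym z (x - u)).symm
    have expand : ⟪A y, y⟫_ℂ + ⟪B (x - y), x - y⟫_ℂ
        = ⟪A u, u⟫_ℂ + ⟪B (x - u), x - u⟫_ℂ + (⟪A z, z⟫_ℂ + ⟪B z, z⟫_ℂ)
          + (⟪A u, z⟫_ℂ - ⟪B (x - u), z⟫_ℂ) + (⟪A z, u⟫_ℂ - ⟪B z, x - u⟫_ℂ) := by
      rw [hxy, hy]
      simp only [map_add, map_sub, inner_add_left, inner_add_right, inner_sub_left,
        inner_sub_right]
      ring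
    rw [cross1, cross2, add_zero, add_zero] at expand
    have hre := congrArg Complex.re expand
    simp only [Complex.add_re] at hre
    have h1 := hA.2 z
    have h2 := hB.2 z
    simp only [ContinuousLinearMap.reApplyInnerSelf, RCLike.re_to_complex] at h1 h2
    linarith
  refine le_antisymm ?_ ?_
  · exact le_ciInf key
  · exact ciInf_le ⟨(0:ℝ), fun r ⟨y, hy⟩ => hy ▸ hnn y⟩ (E x)
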